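/- Let j be an integer with j > 1 and let p = 2j/(2j-1). If f is a nonzero function in L^p and c = (c_n)_{n∈ℤ} is a bounded sequence with |c_n| ≤ |f̂(n)| for all n ∈ ℤ, then K_p(c) ≥ 1/‖f‖_p. -/

import Mathlib

open MeasureTheory Complex
open scoped Real ENNReal

noncomputable section

instance : Fact (0 < 2 * Real.pi) := ⟨by positivity⟩

abbrev Circle2Pi := AddCircle (2 * Real.pi)

abbrev circleMeasure : Measure Circle2Pi := AddCircle.haarAddCircle

/-- `F` is a partial majorant of the sequence `c`: at every `n` with `c n ≠ 0`, the
Fourier coefficient `F̂(n)` is real and at least `|c n|`. -/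
def IsPartialMajorant (c : ℤ → ℂ) (F : Circle2Pi → ℂ) : Prop :=
  ∀ n : ℤ, c n ≠ 0 → (fourierCoeff F n).im = 0 ∧ ‖c n‖ ≤ (fourierCoeff F n).re

/-- A trigonometric polynomial: a finite linear combination of the exponentials `e^{inθ}`. -/
def IsTrigPoly (g : Circle2Pi → ℂ) : Prop :=
  ∃ (s : Finset ℤ) (a : ℤ → ℂ), ∀ x, g x = ∑ n ∈ s, a n * fourier n x

/-- The class `R(c)`: trigonometric polynomials with nonnegative real Fourier coefficients
vanishing off the support of `c`, normalized by `∑ₙ |cₙ| ĝ(n) = 1`. -/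
def RClass (c : ℤ → ℂ) : Set (Circle2Pi → ℂ) :=
  {g | IsTrigPoly g ∧
    (∀ n : ℤ, (fourierCoeff g n).im = 0 ∧ 0 ≤ (fourierCoeff g n).re) ∧
    (∀ n : ℤ, c n = 0 → fourierCoeff g n = 0) ∧
    ∑' n : ℤ, ‖c n‖ * (fourierCoeff g n).re = 1}

/-- `K_p(c)`, expressed in terms of the conjugate exponent `q = p'`:
the infimum of `‖g‖_q` over `g ∈ R(c)`. -/
def Kconst (c : ℤ → ℂ) (q : ℝ≥0∞) : ℝ≥0∞ :=
  ⨅ g ∈ RClass c, eLpNorm g q circleMeasure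

namespace Maj

def fourierHom : Multiplicative ℤ →* C(Circle2Pi, ℂ) where
  toFun n := fourier n.toAdd
  map_one' := by ext x; exact fourier_zero
  map_mul' m n := by ext x; exact fourier_add

def Phi : AddMonoidAlgebra ℂ ℤ →ₐ[ℂ] C(Circle2Pi, ℂ) :=
  AddMonoidAlgebra.lift ℂ C(Circle2Pi, ℂ) ℤ fourierHom

lemma Phi_apply (a : AddMonoidAlgebra ℂ ℤ) (x : Circle2Pi) :
    Phi a x = ∑ n ∈ a.coeff.support, a.coeff n * fourier n x := by
  rw [Phi, AddMonoidAlgebra.lift_apply]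
  simp [Finsupp.sum, fourierHom]

lemma Phi_eq_sum (a : AddMonoidAlgebra ℂ ℤ) {s : Finset ℤ} (hs : a.coeff.support ⊆ s)
    (x : Circle2Pi) : Phi a x = ∑ n ∈ s, a.coeff n * fourier n x := by
  rw [Phi_apply]
  refine Finset.sum_subset hs fun n _ hn => ?_
  simp [Finsupp.notMem_support_iff.mp hn]

lemma fourierCoeff_fourier' (m n : ℤ) :
    fourierCoeff (⇑(fourier m) : Circle2Pi → ℂ) n = if m = n then 1 else 0 := by
  have h1 : fourierCoeff (⇑(fourier m) : Circle2Pi → ℂ) n =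
      fourierCoeff (ContinuousMap.toLp (E := ℂ) 2 circleMeasure ℂ (fourier m)) n :=
    (fourierCoeff_toLp (fourier m) n).symm
  have h2 : (ContinuousMap.toLp (E := ℂ) 2 circleMeasure ℂ (fourier m)) = fourierLp 2 m := rfl
  rw [h1, h2, ← fourierBasis_repr, ← coe_fourierBasis, fourierBasis.repr_self,
    lp.single_apply]
  simp [eq_comm, Pi.single_apply]

lemma memLp_continuous (h : C(Circle2Pi, ℂ)) (p : ℝ≥0∞) : MemLp ⇑h p circleMeasure :=
  (memLp_top_of_bound h.continuous.aestronglyMeasurable ‖h‖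
    (Filter.Eventually.of_forall fun x => h.norm_coe_le_norm x)).mono_exponent le_top

lemma integrable_continuous (h : C(Circle2Pi, ℂ)) : Integrable ⇑h circleMeasure :=
  (memLp_continuous h 1).integrable le_rfl

lemma integrable_fourier_mul {f : Circle2Pi → ℂ} (hf : Integrable f circleMeasure) (n : ℤ) :
    Integrable (fun x => fourier n x * f x) circleMeasure := by
  refine Integrable.bdd_mul (c := 1) hf (map_continuous (fourier n)).aestronglyMeasurable (Filter.Eventually.of_forall fun x => ?_)
  rw [fourier_apply]; exact (Circle.norm_coe _).le

lemma fourierCoeff_mul_eq {f : Circle2Pi → ℂ} (hf : Integrable f circleMeasure)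
    {s : Finset ℤ} (b : ℤ → ℂ) :
    ∫ x, (∑ n ∈ s, b n * (fourier (-n) x * f x)) ∂circleMeasure
      = ∑ n ∈ s, b n * fourierCoeff f n := by
  rw [integral_finset_sum]
  · refine Finset.sum_congr rfl fun n _ => ?_
    rw [integral_const_mul]
    rfl
  · exact fun n _ => ((integrable_fourier_mul hf (-n)).const_mul (b n))

lemma fourierCoeff_Phi (a : AddMonoidAlgebra ℂ ℤ) (n : ℤ) :
    fourierCoeff (⇑(Phi a)) n = a.coeff n := by
  have key : fourierCoeff (⇑(Phi a)) n
      = ∫ x, (∑ m ∈ a.coeff.support, a.coeff m * (fourier (-n) x * fourier m x)) ∂circleMeasure := by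
    rw [fourierCoeff]
    refine integral_congr_ae (Filter.Eventually.of_forall fun x => ?_)
    show fourier (-n) x • Phi a x = _
    rw [smul_eq_mul, Phi_apply, Finset.mul_sum]
    exact Finset.sum_congr rfl fun m _ => by ring
  rw [key, integral_finset_sum _ (fun m _ =>
    ((integrable_fourier_mul (integrable_continuous (fourier m)) (-n)).const_mul (a.coeff m)))]
  have : ∀ m ∈ a.coeff.support, (∫ x, a.coeff m * (fourier (-n) x * fourier m x) ∂circleMeasure)
      = if m = n then a.coeff m else 0 := by
    intro m _
    rw [integral_const_mul]
    have : (∫ x, fourier (-n) x * fourier m x ∂circleMeasure)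
        = fourierCoeff (⇑(fourier m) : Circle2Pi → ℂ) n := rfl
    rw [this, fourierCoeff_fourier']
    split <;> simp
  rw [Finset.sum_congr rfl this, Finset.sum_ite_eq' a.coeff.support n (fun m => a.coeff m)]
  split
  · rfl
  · exact (Finsupp.notMem_support_iff.mp (by assumption)).symm

lemma parseval (a : AddMonoidAlgebra ℂ ℤ) :
    ∑ n ∈ a.coeff.support, ‖a.coeff n‖ ^ 2 = ∫ x, ‖Phi a x‖ ^ 2 ∂circleMeasure := by
  have H := tsum_sq_fourierCoeff (ContinuousMap.toLp (E := ℂ) 2 circleMeasure ℂ (Phi a))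
  simp_rw [fourierCoeff_toLp, fourierCoeff_Phi] at H
  rw [tsum_eq_sum (s := a.coeff.support)
    (fun n hn => by rw [Finsupp.notMem_support_iff.mp hn]; simp)] at H
  rw [H]
  refine integral_congr_ae ?_
  filter_upwards [ContinuousMap.coeFn_toLp (E := ℂ) (p := 2) (𝕜 := ℂ) circleMeasure (Phi a)] with x hx
  rw [hx]



def Dom (a b : AddMonoidAlgebra ℂ ℤ) : Prop :=
  ∀ n : ℤ, ‖a.coeff n‖ ≤ (b.coeff n).re ∧ (b.coeff n).im = 0

lemma Dom.support_subset {a b : AddMonoidAlgebra ℂ ℤ} (h : Dom a b) :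
    a.coeff.support ⊆ b.coeff.support := by
  intro n hn
  rw [Finsupp.mem_support_iff] at hn ⊢
  intro hb
  have := (h n).1
  rw [hb] at this
  simp only [Complex.zero_re] at this
  exact hn (norm_eq_zero.mp (le_antisymm this (norm_nonneg _)))

lemma Dom.one : Dom 1 1 := by
  intro n
  rw [AddMonoidAlgebra.one_def]
  simp only [AddMonoidAlgebra.coeff_single, Finsupp.single_apply]
  split <;> simp

lemma Dom.mul {a b a' b' : AddMonoidAlgebra ℂ ℤ} (h : Dom a b) (h' : Dom a' b') :
    Dom (a * a') (b * b') := by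
  intro n
  rw [AddMonoidAlgebra.coeff_mul, AddMonoidAlgebra.coeff_mul]
  simp only [Finsupp.sum]
  constructor
  · calc ‖∑ k ∈ a.coeff.support, ∑ l ∈ a'.coeff.support, if k + l = n then a.coeff k * a'.coeff l else 0‖
        ≤ ∑ k ∈ a.coeff.support, ∑ l ∈ a'.coeff.support, ‖if k + l = n then a.coeff k * a'.coeff l else 0‖ := by
          refine (norm_sum_le _ _).trans (Finset.sum_le_sum fun k _ => norm_sum_le _ _)
      _ ≤ ∑ k ∈ a.coeff.support, ∑ l ∈ a'.coeff.support,
            (if k + l = n then (b.coeff k).re * (b'.coeff l).re else 0) := by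
          refine Finset.sum_le_sum fun k _ => Finset.sum_le_sum fun l _ => ?_
          split
          · rw [norm_mul]
            exact mul_le_mul (h k).1 (h' l).1 (norm_nonneg _)
              (le_trans (norm_nonneg _) (h k).1)
          · simp
      _ ≤ ∑ k ∈ b.coeff.support, ∑ l ∈ b'.coeff.support,
            (if k + l = n then (b.coeff k).re * (b'.coeff l).re else 0) := by
          have hterm : ∀ k l, 0 ≤ if k + l = n then (b.coeff k).re * (b'.coeff l).re else 0 := by
            intro k l
            split
            · exact mul_nonneg (le_trans (norm_nonneg _) (h k).1)
                (le_trans (norm_nonneg _) (h' l).1)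
            · exact le_refl 0
          refine le_trans (Finset.sum_le_sum fun k _ =>
            Finset.sum_le_sum_of_subset_of_nonneg h'.support_subset
              (fun l _ _ => hterm k l)) ?_
          exact Finset.sum_le_sum_of_subset_of_nonneg h.support_subset
            (fun k _ _ => Finset.sum_nonneg fun l _ => hterm k l)
      _ = (∑ k ∈ b.coeff.support, ∑ l ∈ b'.coeff.support, if k + l = n then b.coeff k * b'.coeff l else 0).re := by
          rw [Complex.re_sum]
          refine Finset.sum_congr rfl fun k _ => ?_
          rw [Complex.re_sum]
          refine Finset.sum_congr rfl fun l _ => ?_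
          split
          · rw [Complex.mul_re, (h' l).2, (h k).2]
            ring
          · simp
  · rw [Complex.im_sum]
    refine Finset.sum_eq_zero fun k _ => ?_
    rw [Complex.im_sum]
    refine Finset.sum_eq_zero fun l _ => ?_
    split
    · rw [Complex.mul_im, (h' l).2, (h k).2]
      ring
    · simp

lemma Dom.pow {a b : AddMonoidAlgebra ℂ ℤ} (h : Dom a b) (j : ℕ) : Dom (a ^ j) (b ^ j) := by
  induction j with
  | zero => simpa using Dom.one
  | succ m ih => rw [pow_succ, pow_succ]; exact ih.mul h


lemma int_pow_le {a b : AddMonoidAlgebra ℂ ℤ} (h : Dom a b) (j : ℕ) :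
    ∫ x, ‖Phi a x‖ ^ (2*j) ∂circleMeasure ≤ ∫ x, ‖Phi b x‖ ^ (2*j) ∂circleMeasure := by
  have key : ∀ c : AddMonoidAlgebra ℂ ℤ, ∫ x, ‖Phi c x‖ ^ (2*j) ∂circleMeasure
      = ∑ n ∈ (c^j).coeff.support, ‖(c^j).coeff n‖ ^ 2 := by
    intro c
    have e1 : ∀ x, ‖Phi c x‖ ^ (2*j) = ‖(Phi (c^j)) x‖ ^ 2 := by
      intro x
      rw [map_pow]
      have : (Phi c ^ j) x = (Phi c x) ^ j := by simp
      rw [this, norm_pow, ← pow_mul, mul_comm j 2]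
    rw [integral_congr_ae (Filter.Eventually.of_forall e1), ← parseval]
  rw [key, key]
  have hd := h.pow j
  calc ∑ n ∈ (a^j).coeff.support, ‖(a^j).coeff n‖ ^ 2
      ≤ ∑ n ∈ (a^j).coeff.support, ‖(b^j).coeff n‖ ^ 2 := by
        refine Finset.sum_le_sum fun n _ => ?_
        have h1 : ‖(a^j).coeff n‖ ≤ ‖(b^j).coeff n‖ :=
          le_trans (hd n).1 (le_trans (Complex.re_le_norm _) (le_of_eq rfl))
        exact pow_le_pow_left₀ (norm_nonneg _) h1 2
    _ ≤ ∑ n ∈ (b^j).coeff.support, ‖(b^j).coeff n‖ ^ 2 := by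
        refine Finset.sum_le_sum_of_subset_of_nonneg hd.support_subset fun n _ _ => by positivity


lemma abs_u_mul (z : ℂ) :
    (starRingEnd ℂ) (if z = 0 then 1 else z / (‖z‖ : ℂ)) * z = (‖z‖ : ℂ) := by
  by_cases h : z = 0
  · simp [h]
  · have habs : (‖z‖ : ℂ) ≠ 0 :=
      Complex.ofReal_ne_zero.mpr (norm_ne_zero_iff.mpr h)
    rw [if_neg h, map_div₀, Complex.conj_ofReal, div_mul_eq_mul_div, mul_comm,
      Complex.mul_conj, Complex.normSq_eq_norm_sq]
    push_cast
    rw [sq, mul_div_assoc, div_self habs, mul_one]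

end Maj

open Maj

/-- for `p = 2j/(2j-1)` with integer `j > 1` (so `p' = 2j`), if `f ∈ L^p`
is nonzero and `|c n| ≤ |f̂(n)|` for all `n`, then `K_p(c) ≥ 1/‖f‖_p`. -/
theorem Kconst_ge_inv_norm (j : ℕ) (hj : 1 < j)
    (p : ℝ≥0∞) (hp : p = (2 * j : ℝ≥0∞) / (2 * j - 1))
    (f : Circle2Pi → ℂ) (hf : MemLp f p circleMeasure)
    (hf0 : ¬ f =ᵐ[circleMeasure] 0)
    (c : ℤ → ℂ) (hbdd : ∃ M : ℝ, ∀ n : ℤ, ‖c n‖ ≤ M)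
    (hcf : ∀ n : ℤ, ‖c n‖ ≤ ‖fourierCoeff f n‖) :
    1 / eLpNorm f p circleMeasure ≤ Kconst c (2 * j : ℝ≥0∞) := by
  classical
  clear hbdd
  -- numerology
  set nn : ℕ := 2 * j with hnn
  have hq : (2 * j : ℝ≥0∞) = ((nn : ℕ) : ℝ≥0∞) := by push_cast [hnn]; ring
  have hnn1 : (1:ℕ) ≤ nn := by omega
  have hq0 : (2 * j : ℝ≥0∞) ≠ 0 := by rw [hq]; exact_mod_cast (by omega : nn ≠ 0)
  have hqtop : (2 * j : ℝ≥0∞) ≠ ∞ := by rw [hq]; exact ENNReal.natCast_ne_top nn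
  have hsub : (2 * j : ℝ≥0∞) - 1 = ((nn - 1 : ℕ) : ℝ≥0∞) := by
    rw [hq, ENNReal.natCast_sub, Nat.cast_one]
  have hm0 : ((nn - 1 : ℕ) : ℝ≥0∞) ≠ 0 := by exact_mod_cast (by omega : nn - 1 ≠ 0)
  have hmtop : ((nn - 1 : ℕ) : ℝ≥0∞) ≠ ∞ := ENNReal.natCast_ne_top _
  have hpeq : p = ((nn : ℕ) : ℝ≥0∞) / ((nn - 1 : ℕ) : ℝ≥0∞) := by rw [hp, hsub, hq]
  have hp1 : 1 ≤ p := by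
    rw [hpeq, ENNReal.le_div_iff_mul_le (Or.inl hm0) (Or.inl hmtop), one_mul]
    exact_mod_cast (by omega : nn - 1 ≤ nn)
  have hp0 : p ≠ 0 := by
    intro h; rw [h] at hp1; exact (by simp : ¬ (1:ℝ≥0∞) ≤ 0) hp1
  have hptop : p ≠ ∞ := by
    rw [hpeq]
    exact (ENNReal.div_lt_top (ENNReal.natCast_ne_top _) hm0).ne
  have hconj : 1 / (1:ℝ≥0∞) = 1 / (2 * j : ℝ≥0∞) + 1 / p := by
    rw [hpeq, hq]
    simp only [one_div]
    rw [ENNReal.inv_div (Or.inl hmtop) (Or.inl hm0), inv_one]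
    rw [show (((nn:ℕ):ℝ≥0∞))⁻¹ = 1 / ((nn:ℕ):ℝ≥0∞) from (one_div _).symm,
      ENNReal.div_add_div_same]
    have h1 : (1 : ℝ≥0∞) + ((nn - 1 : ℕ) : ℝ≥0∞) = ((nn : ℕ) : ℝ≥0∞) := by
      rw [show (1:ℝ≥0∞) = ((1:ℕ):ℝ≥0∞) by simp, ← Nat.cast_add]
      congr 1
      omega
    rw [h1, ENNReal.div_self (by exact_mod_cast (by omega : nn ≠ 0)) (ENNReal.natCast_ne_top _)]
  have hqToReal : (2 * j : ℝ≥0∞).toReal = ((nn : ℕ) : ℝ) := by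
    rw [hq]; simp
  -- main per-g bound
  rw [Kconst]
  refine le_iInf₂ fun g hg => ?_
  obtain ⟨⟨s, a, hga⟩, hpos, hvan, hnorm⟩ := hg
  -- the coefficient finsupp of g
  set A : AddMonoidAlgebra ℂ ℤ := ∑ m ∈ s, AddMonoidAlgebra.single m (a m) with hA
  have hPhiA : ∀ x, Phi A x = ∑ n ∈ s, a n * fourier n x := by
    intro x
    rw [hA, map_sum]
    rw [ContinuousMap.coe_sum, Finset.sum_apply]
    refine Finset.sum_congr rfl fun m _ => ?_
    rw [show Phi (AddMonoidAlgebra.single m (a m)) = a m • fourierHom (Multiplicative.ofAdd m) from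
      AddMonoidAlgebra.lift_single _ _ _]
    simp [fourierHom]
  have hgPhi : g = ⇑(Phi A) := funext fun x => (hga x).trans (hPhiA x).symm
  have hcoeff : ∀ n, fourierCoeff g n = A.coeff n := by
    intro n; rw [hgPhi]; exact fourierCoeff_Phi A n
  -- phases
  set u : ℤ → ℂ := fun n =>
    if fourierCoeff f n = 0 then 1 else fourierCoeff f n / (‖fourierCoeff f n‖ : ℂ)
    with hu
  have hu0 : ∀ n, u n ≠ 0 := by
    intro n
    by_cases hfn : fourierCoeff f n = 0
    · simp [hu, hfn]
    · simp only [hu, if_neg hfn]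
      exact div_ne_zero hfn (Complex.ofReal_ne_zero.mpr (norm_ne_zero_iff.mpr hfn))
  have habsu : ∀ n, ‖u n‖ = 1 := by
    intro n
    by_cases hfn : fourierCoeff f n = 0
    · simp [hu, hfn]
    · simp only [hu, if_neg hfn]
      rw [norm_div, Complex.norm_real, norm_norm,
        div_self (norm_ne_zero_iff.mpr hfn)]
  set H : AddMonoidAlgebra ℂ ℤ :=
    AddMonoidAlgebra.ofCoeff (Finsupp.onFinset A.coeff.support (fun n => u n * A.coeff n)
      (fun n hn => Finsupp.mem_support_iff.mpr (right_ne_zero_of_mul hn))) with hH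
  have hHapp : ∀ n, H.coeff n = u n * A.coeff n := fun n => rfl
  have hAre : ∀ n, ‖A.coeff n‖ = (A.coeff n).re := by
    intro n
    have h1 := (hpos n).1
    have h2 := (hpos n).2
    rw [hcoeff n] at h1 h2
    rw [show A.coeff n = ((A.coeff n).re : ℂ) from Complex.ext rfl (by simp [h1])]
    rw [Complex.norm_real, Real.norm_of_nonneg h2]
    simp
  have hDom : Dom H A := by
    intro n
    constructor
    · rw [hHapp, norm_mul, habsu, one_mul, hAre]
    · have h1 := (hpos n).1
      rw [hcoeff n] at h1
      exact h1
  have hHsupp : H.coeff.support = A.coeff.support := by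
    ext n
    simp only [Finsupp.mem_support_iff, hHapp]
    constructor
    · exact fun h => right_ne_zero_of_mul h
    · exact fun h => mul_ne_zero (hu0 n) h
  -- the integral identity
  have hfInt : Integrable f circleMeasure := hf.integrable hp1
  have hI : (∫ x, f x * (starRingEnd ℂ) (Phi H x) ∂circleMeasure)
      = ((∑ n ∈ A.coeff.support, ‖fourierCoeff f n‖ * (A.coeff n).re : ℝ) : ℂ) := by
    have e1 : ∀ x, f x * (starRingEnd ℂ) (Phi H x)
        = ∑ n ∈ H.coeff.support, (starRingEnd ℂ) (H.coeff n) * (fourier (-n) x * f x) := by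
      intro x
      rw [Phi_apply, map_sum, Finset.mul_sum]
      refine Finset.sum_congr rfl fun n _ => ?_
      rw [map_mul, ← fourier_neg]
      ring
    rw [integral_congr_ae (Filter.Eventually.of_forall e1),
      fourierCoeff_mul_eq hfInt (fun n => (starRingEnd ℂ) (H.coeff n)), hHsupp]
    rw [Complex.ofReal_sum]
    refine Finset.sum_congr rfl fun n _ => ?_
    have hAreal : (starRingEnd ℂ) (A.coeff n) = A.coeff n := by
      rw [Complex.conj_eq_iff_im]
      have h1 := (hpos n).1
      rw [hcoeff n] at h1
      exact h1
    rw [hHapp, map_mul, hAreal, mul_comm ((starRingEnd ℂ) (u n)) (A.coeff n), mul_assoc,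
      show (starRingEnd ℂ) (u n) * fourierCoeff f n = (‖fourierCoeff f n‖ : ℂ) from
        abs_u_mul (fourierCoeff f n)]
    rw [show A.coeff n = ((A.coeff n).re : ℂ) from Complex.ext rfl (by
      have h1 := (hpos n).1
      rw [hcoeff n] at h1
      simp [h1])]
    simp only [Complex.ofReal_mul, Complex.ofReal_re]
    ring
  -- lower bound 1 ≤ sum
  have hsum1 : (1:ℝ) ≤ ∑ n ∈ A.coeff.support, ‖fourierCoeff f n‖ * (A.coeff n).re := by
    have hzero : ∀ n ∉ A.coeff.support, ‖c n‖ * (fourierCoeff g n).re = 0 := by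
      intro n hn
      rw [hcoeff n, Finsupp.notMem_support_iff.mp hn]
      simp
    rw [← hnorm, tsum_eq_sum hzero]
    refine Finset.sum_le_sum fun n _ => ?_
    rw [hcoeff n]
    have h2 := (hpos n).2
    rw [hcoeff n] at h2
    exact mul_le_mul_of_nonneg_right (hcf n) h2
  -- Hölder
  have hPhiHmem : MemLp (⇑(Phi H)) (2 * j : ℝ≥0∞) circleMeasure := memLp_continuous _ _
  have hgq : MemLp g (2 * j : ℝ≥0∞) circleMeasure := by
    rw [hgPhi]; exact memLp_continuous _ _
  have hFInt : Integrable (fun x => f x * (starRingEnd ℂ) (Phi H x)) circleMeasure := by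
    have := hfInt.bdd_mul
      (c := ‖Phi H‖) ((map_continuous (Phi H)).star.aestronglyMeasurable)
      (Filter.Eventually.of_forall fun x => by
        rw [show star (Phi H x) = (starRingEnd ℂ) (Phi H x) from rfl]
        rw [Complex.norm_conj]
        exact (Phi H).norm_coe_le_norm x)
    refine this.congr (Filter.Eventually.of_forall fun x => mul_comm _ _)
  have holder : eLpNorm (fun x => f x * (starRingEnd ℂ) (Phi H x)) 1 circleMeasure
      ≤ eLpNorm f p circleMeasure * eLpNorm (⇑(Phi H)) (2 * j : ℝ≥0∞) circleMeasure := by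
    have h1 : eLpNorm (fun x => f x * (starRingEnd ℂ) (Phi H x)) 1 circleMeasure
        = eLpNorm ((fun x => (starRingEnd ℂ) (Phi H x)) • f) 1 circleMeasure := by
      refine eLpNorm_congr_ae (Filter.Eventually.of_forall fun x => ?_)
      simp [mul_comm]
    have h2 := eLpNorm_smul_le_mul_eLpNorm (μ := circleMeasure) (p := (2 * j : ℝ≥0∞)) (q := p) (r := 1) hf.aestronglyMeasurable
      ((map_continuous (Phi H)).star.aestronglyMeasurable :
        AEStronglyMeasurable (fun x => (starRingEnd ℂ) (Phi H x)) circleMeasure) (hpqr := ⟨by simpa only [one_div] using hconj.symm⟩)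
    have h3 : eLpNorm (fun x => (starRingEnd ℂ) (Phi H x)) (2 * j : ℝ≥0∞) circleMeasure
        = eLpNorm (⇑(Phi H)) (2 * j : ℝ≥0∞) circleMeasure := by
      refine eLpNorm_congr_norm_ae (Filter.Eventually.of_forall fun x => ?_)
      rw [Complex.norm_conj]
    rw [h1, ← h3]
    exact h2.trans (le_of_eq (mul_comm _ _))
  -- compare eLpNorms of Phi H and g
  have hHg : eLpNorm (⇑(Phi H)) (2 * j : ℝ≥0∞) circleMeasure
      ≤ eLpNorm g (2 * j : ℝ≥0∞) circleMeasure := by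
    rw [hPhiHmem.eLpNorm_eq_integral_rpow_norm hq0 hqtop,
      hgq.eLpNorm_eq_integral_rpow_norm hq0 hqtop]
    refine ENNReal.ofReal_le_ofReal ?_
    refine Real.rpow_le_rpow (by positivity) ?_ (by positivity)
    have e : ∀ (F : Circle2Pi → ℂ) (x : Circle2Pi),
        ‖F x‖ ^ (2 * j : ℝ≥0∞).toReal = ‖F x‖ ^ (2 * j : ℕ) := by
      intro F x
      rw [hqToReal, Real.rpow_natCast]
    calc ∫ x, ‖(Phi H) x‖ ^ (2 * j : ℝ≥0∞).toReal ∂circleMeasure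
        = ∫ x, ‖(Phi H) x‖ ^ (2 * j : ℕ) ∂circleMeasure := by
          exact integral_congr_ae (Filter.Eventually.of_forall fun x => e _ x)
      _ ≤ ∫ x, ‖(Phi A) x‖ ^ (2 * j : ℕ) ∂circleMeasure := int_pow_le hDom j
      _ = ∫ x, ‖g x‖ ^ (2 * j : ℝ≥0∞).toReal ∂circleMeasure := by
          rw [hgPhi]
          exact integral_congr_ae (Filter.Eventually.of_forall fun x => (e _ x).symm)
  -- assemble
  have hXtop : eLpNorm f p circleMeasure * eLpNorm g (2 * j : ℝ≥0∞) circleMeasure ≠ ∞ :=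
    ENNReal.mul_ne_top hf.2.ne hgq.2.ne
  have hreal : (1:ℝ) ≤ (eLpNorm f p circleMeasure
      * eLpNorm g (2 * j : ℝ≥0∞) circleMeasure).toReal := by
    have step1 : (1:ℝ) ≤ ‖∫ x, f x * (starRingEnd ℂ) (Phi H x) ∂circleMeasure‖ := by
      rw [hI, Complex.norm_real, Real.norm_eq_abs]
      exact le_trans hsum1 (le_abs_self _)
    have step2 : ‖∫ x, f x * (starRingEnd ℂ) (Phi H x) ∂circleMeasure‖
        ≤ ∫ x, ‖f x * (starRingEnd ℂ) (Phi H x)‖ ∂circleMeasure :=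
      norm_integral_le_integral_norm _
    have step3 : ∫ x, ‖f x * (starRingEnd ℂ) (Phi H x)‖ ∂circleMeasure
        = (eLpNorm (fun x => f x * (starRingEnd ℂ) (Phi H x)) 1 circleMeasure).toReal := by
      rw [eLpNorm_one_eq_lintegral_enorm,
        ← MeasureTheory.ofReal_integral_norm_eq_lintegral_enorm hFInt,
        ENNReal.toReal_ofReal (by positivity)]
    have step4 : (eLpNorm (fun x => f x * (starRingEnd ℂ) (Phi H x)) 1 circleMeasure).toReal
        ≤ (eLpNorm f p circleMeasure * eLpNorm g (2 * j : ℝ≥0∞) circleMeasure).toReal := by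
      refine ENNReal.toReal_mono hXtop ?_
      exact holder.trans (mul_le_mul_right hHg _)
    linarith [step1.trans (step2.trans (step3.le.trans step4))]
  have hX1 : (1:ℝ≥0∞) ≤ eLpNorm f p circleMeasure * eLpNorm g (2 * j : ℝ≥0∞) circleMeasure := by
    rw [← ENNReal.ofReal_one]
    exact ENNReal.ofReal_le_of_le_toReal hreal
  have hfne0 : eLpNorm f p circleMeasure ≠ 0 := by
    intro h
    exact hf0 ((eLpNorm_eq_zero_iff hf.aestronglyMeasurable hp0).mp h)
  have h5 := ENNReal.div_le_div_right hX1 (eLpNorm f p circleMeasure)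
  refine le_trans h5 (le_of_eq ?_)
  rw [mul_comm (eLpNorm f p circleMeasure), mul_div_assoc,
    ENNReal.div_self hfne0 hf.2.ne, mul_one]
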